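/- Let ι be a finite type with a parity function p : ι → ZMod 2, let ε ∈ ZMod 2 and σ ∈ {1, −1}. Let L be an invertible ι×ι matrix over ℝ which is parity-homogeneous of parity ε (L A B = 0 whenever p A + p B ≠ ε) and satisfies the super-symmetry condition L A B = σ · (−1)^{p A · p B} · L B A for all A, B. Then the inverse matrix satisfies the opposite symmetry with respect to shifted parity: L⁻¹ A B = −σ · (−1)^{(p A + 1)(p B + 1) + ε} · L⁻¹ B A for all A, B. (Here exponents of −1 are computed from representatives in {0,1} of the ZMod 2 values.) -/

import Mathlib

private lemma zmod2_vals : ((0:ZMod 2)).val = 0 ∧ ((1:ZMod 2)).val = 1 ∧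
    ((2:ZMod 2)).val = 0 ∧ ((3:ZMod 2)).val = 1 ∧ ((4:ZMod 2)).val = 0 := ⟨rfl, rfl, rfl, rfl, rfl⟩

private lemma zmod2_cases (x : ZMod 2) : x = 0 ∨ x = 1 := by revert x; decide

private lemma sign_aux1 (a b c e : ZMod 2) (h : a + b = e) :
    (-1:ℝ)^((b + c + e).val) = (-1:ℝ)^((a + c).val) := by
  subst h
  rcases zmod2_cases a with rfl | rfl <;> rcases zmod2_cases b with rfl | rfl <;> rcases zmod2_cases c with rfl | rfl <;>
    norm_num [zmod2_vals.1, zmod2_vals.2.1, zmod2_vals.2.2.1, zmod2_vals.2.2.2.1, zmod2_vals.2.2.2.2]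

private lemma sign_aux2 (a b c e : ZMod 2) (h : a + b = e) :
    (-1:ℝ)^(a.val*b.val) * (-1:ℝ)^(b.val*c.val)
      = (-1:ℝ)^((e + a).val * (a.val + c.val)) := by
  subst h
  rcases zmod2_cases a with rfl | rfl <;> rcases zmod2_cases b with rfl | rfl <;> rcases zmod2_cases c with rfl | rfl <;>
    norm_num [zmod2_vals.1, zmod2_vals.2.1, zmod2_vals.2.2.1, zmod2_vals.2.2.2.1, zmod2_vals.2.2.2.2]

private lemma sign_aux3 (a e : ZMod 2) :
    (-1:ℝ)^((e + a).val * (a.val + a.val)) = 1 := by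
  fin_cases a <;> fin_cases e <;>
    norm_num [zmod2_vals.1, zmod2_vals.2.1, zmod2_vals.2.2.1, zmod2_vals.2.2.2.1, zmod2_vals.2.2.2.2]

private lemma sign_aux4 (a b e : ZMod 2) (h : a + b ≠ e) :
    (a + b + e).val = 1 := by
  revert h; revert a b e; decide

private lemma sign_aux5 (a b e : ZMod 2) (h : a + b = e) :
    (-1:ℝ)^((a.val+1)*(b.val+1)+e.val) = -(-1:ℝ)^(a.val*b.val) := by
  subst h
  rcases zmod2_cases a with rfl | rfl <;> rcases zmod2_cases b with rfl | rfl <;>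
    norm_num [zmod2_vals.1, zmod2_vals.2.1, zmod2_vals.2.2.1, zmod2_vals.2.2.2.1, zmod2_vals.2.2.2.2]

private lemma sign_aux6 (a a' : ZMod 2) : (-1:ℝ)^((a + a').val) = 1 ∨ a ≠ a' := by
  by_cases h : a = a'
  · left; subst h
    rcases zmod2_cases a with rfl | rfl <;> norm_num [zmod2_vals.1, zmod2_vals.2.1, zmod2_vals.2.2.1]
  · right; exact h

/-- Let `L` be an invertible real matrix indexed by a finite type with parity function
`p`, parity-homogeneous of parity `ε`, satisfying the super-symmetry condition
`L A B = σ (−1)^{p A · p B} L B A` (with `σ = ±1`). Then its inverse satisfies the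
opposite symmetry with respect to shifted parity:
`L⁻¹ A B = −σ (−1)^{(p A + 1)(p B + 1) + ε} L⁻¹ B A`. -/
theorem inverse_supersymmetry_shift
    (ι : Type*) [Fintype ι] [DecidableEq ι] (p : ι → ZMod 2) (ε : ZMod 2)
    (σ : ℝ) (hσ : σ = 1 ∨ σ = -1)
    (L : Matrix ι ι ℝ) (hL : IsUnit L.det)
    (hhom : ∀ A B, p A + p B ≠ ε → L A B = 0)
    (hsym : ∀ A B, L A B = σ * (-1 : ℝ) ^ ((p A).val * (p B).val) * L B A) :
    ∀ A B, L⁻¹ A B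
      = -σ * (-1 : ℝ) ^ (((p A).val + 1) * ((p B).val + 1) + ε.val) * L⁻¹ B A := by
  have hLinv : L * L⁻¹ = 1 := Matrix.mul_nonsing_inv L hL
  have hinvL : L⁻¹ * L = 1 := Matrix.nonsing_inv_mul L hL
  -- Step 1: homogeneity of the inverse
  have hom_inv : ∀ A B, p A + p B ≠ ε → L⁻¹ A B = 0 := by
    have key : L * (Matrix.of fun X Y => (-1:ℝ)^((p X + p Y + ε).val) * L⁻¹ X Y) = 1 := by
      ext A C
      rw [Matrix.mul_apply]
      have hterm : ∀ B, L A B * ((-1:ℝ)^((p B + p C + ε).val) * L⁻¹ B C)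
          = (-1:ℝ)^((p A + p C).val) * (L A B * L⁻¹ B C) := by
        intro B
        by_cases h : p A + p B = ε
        · rw [sign_aux1 (p A) (p B) (p C) ε h]; ring
        · rw [hhom A B h]; ring
      calc ∑ B, L A B * Matrix.of (fun X Y => (-1:ℝ)^((p X + p Y + ε).val) * L⁻¹ X Y) B C
          = ∑ B, (-1:ℝ)^((p A + p C).val) * (L A B * L⁻¹ B C) :=
            Finset.sum_congr rfl (fun B _ => hterm B)
        _ = (-1:ℝ)^((p A + p C).val) * ∑ B, L A B * L⁻¹ B C := by rw [Finset.mul_sum]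
        _ = (-1:ℝ)^((p A + p C).val) * (L * L⁻¹) A C := by rw [Matrix.mul_apply]
        _ = (1 : Matrix ι ι ℝ) A C := by
            rw [hLinv]
            rcases sign_aux6 (p A) (p C) with h1 | h1
            · rw [h1, one_mul]
            · by_cases hAC : A = C
              · subst hAC; simp at h1
              · simp [Matrix.one_apply, hAC]
    have hEq := Matrix.inv_eq_right_inv key
    intro A B hne
    have h1 : L⁻¹ A B = (-1:ℝ)^((p A + p B + ε).val) * L⁻¹ A B := congrFun (congrFun hEq A) B
    rw [sign_aux4 (p A) (p B) ε hne] at h1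
    simp at h1
    linarith
  -- Step 2: super-symmetry of the inverse
  have hσ2 : σ * σ = 1 := by rcases hσ with h|h <;> rw [h] <;> norm_num
  have key2 : L * (Matrix.of fun X Y => σ * (-1:ℝ)^((p X).val*(p Y).val) * L⁻¹ Y X) = 1 := by
    ext A C
    rw [Matrix.mul_apply]
    have hterm : ∀ B, L A B * (σ * (-1:ℝ)^((p B).val*(p C).val) * L⁻¹ C B)
        = (-1:ℝ)^((ε + p A).val * ((p A).val + (p C).val)) * (L⁻¹ C B * L B A) := by
      intro B
      by_cases h : p A + p B = ε
      · rw [hsym A B]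
        have hs := sign_aux2 (p A) (p B) (p C) ε h
        calc σ * (-1:ℝ)^((p A).val*(p B).val) * L B A * (σ * (-1:ℝ)^((p B).val*(p C).val) * L⁻¹ C B)
            = (σ * σ) * ((-1:ℝ)^((p A).val*(p B).val) * (-1:ℝ)^((p B).val*(p C).val)) * (L⁻¹ C B * L B A) := by ring
          _ = (-1:ℝ)^((ε + p A).val * ((p A).val + (p C).val)) * (L⁻¹ C B * L B A) := by
              rw [hσ2, hs]; ring
      · rw [hhom A B h, hhom B A (by rwa [add_comm])]; ring
    calc ∑ B, L A B * Matrix.of (fun X Y => σ * (-1:ℝ)^((p X).val*(p Y).val) * L⁻¹ Y X) B C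
        = ∑ B, (-1:ℝ)^((ε + p A).val * ((p A).val + (p C).val)) * (L⁻¹ C B * L B A) :=
          Finset.sum_congr rfl (fun B _ => hterm B)
      _ = (-1:ℝ)^((ε + p A).val * ((p A).val + (p C).val)) * ∑ B, L⁻¹ C B * L B A := by
          rw [Finset.mul_sum]
      _ = (-1:ℝ)^((ε + p A).val * ((p A).val + (p C).val)) * (L⁻¹ * L) C A := by
          rw [Matrix.mul_apply]
      _ = (1 : Matrix ι ι ℝ) A C := by
          rw [hinvL]
          by_cases hAC : A = C
          · subst hAC; rw [sign_aux3 (p A) ε]; simp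
          · simp [Matrix.one_apply, hAC, Ne.symm hAC]
  have hsym_inv : ∀ A B, L⁻¹ A B = σ * (-1:ℝ)^((p A).val*(p B).val) * L⁻¹ B A := by
    intro A B
    exact congrFun (congrFun (Matrix.inv_eq_right_inv key2) A) B
  intro A B
  by_cases h : p A + p B = ε
  · rw [hsym_inv A B, sign_aux5 (p A) (p B) ε h]; ring
  · rw [hom_inv A B h, hom_inv B A (by rwa [add_comm])]; ring
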